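/- Comparison lemma: let φ, ψ solve φ̇(τ) = f(φ(τ), t_m − τ) and ψ̇(τ) = f(ψ(τ), t_m + τ) with φ(0) = ψ(0) = 0, where f(θ,t) = −sin²θ − λA(t)cos²θ, λ > 0, and A is continuous, positive, and strictly increasing. Then ψ(τ) < φ(τ) < 0 for all τ > 0 with t_m + τ ≤ 1 and ψ(τ) ≥ −π/2. -/

import Mathlib

open Set Real

/-- Pointwise negativity of the right-hand side of the ODE. -/
lemma stmt12_aux_neg (a θ : ℝ) (ha : 0 < a) :
    -(Real.sin θ) ^ 2 - a * (Real.cos θ) ^ 2 < 0 := by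
  have h := Real.sin_sq_add_cos_sq θ
  rcases le_or_gt a 1 with h1 | h1
  · nlinarith [sq_nonneg (Real.sin θ), sq_nonneg (Real.cos θ)]
  · nlinarith [sq_nonneg (Real.sin θ), sq_nonneg (Real.cos θ)]

/-- Key pointwise inequality: the difference of right-hand sides is bounded
below by `-L |x - y| + p`. -/
lemma stmt12_aux_ineq (lam M ap am x y : ℝ) (hlam : 0 < lam) (hp0 : 0 < ap)
    (hpM : ap ≤ M) :
    -(2 * (1 + lam * M) * |x - y|) + lam * (ap - am) * (Real.cos x) ^ 2 ≤
      (-(Real.sin x) ^ 2 - lam * am * (Real.cos x) ^ 2) -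
        (-(Real.sin y) ^ 2 - lam * ap * (Real.cos y) ^ 2) := by
  have hid : (-(Real.sin x) ^ 2 - lam * am * (Real.cos x) ^ 2) -
        (-(Real.sin y) ^ 2 - lam * ap * (Real.cos y) ^ 2)
      = ((Real.sin y) ^ 2 - (Real.sin x) ^ 2) * (1 - lam * ap) +
        lam * (ap - am) * (Real.cos x) ^ 2 := by
    rw [Real.cos_sq' x, Real.cos_sq' y]; ring
  have hb1 : |(Real.sin y) ^ 2 - (Real.sin x) ^ 2| ≤ 2 * |x - y| := by
    have hfac : (Real.sin y) ^ 2 - (Real.sin x) ^ 2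
        = (Real.sin y - Real.sin x) * (Real.sin y + Real.sin x) := by ring
    rw [hfac, abs_mul]
    have h1 : |Real.sin y - Real.sin x| ≤ |y - x| := by
      rw [Real.sin_sub_sin, abs_mul, abs_mul]
      have hs := Real.abs_sin_le_abs (x := (y - x) / 2)
      have hc := Real.abs_cos_le_one ((y + x) / 2)
      have h2 : |(2:ℝ)| = 2 := by norm_num
      have hhalf : |(y - x) / 2| = |y - x| / 2 := by
        rw [abs_div]; norm_num
      rw [h2]
      rw [hhalf] at hs
      nlinarith [abs_nonneg (y - x), abs_nonneg (Real.cos ((y + x) / 2)),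
        abs_nonneg (Real.sin ((y - x) / 2))]
    have h2 : |Real.sin y + Real.sin x| ≤ 2 := by
      have := abs_add_le (Real.sin y) (Real.sin x)
      have hy := Real.abs_sin_le_one y
      have hx := Real.abs_sin_le_one x
      linarith
    calc |Real.sin y - Real.sin x| * |Real.sin y + Real.sin x|
        ≤ |y - x| * 2 := by
          exact mul_le_mul h1 h2 (abs_nonneg _) (abs_nonneg _)
      _ = 2 * |x - y| := by rw [abs_sub_comm]; ring
  have hb2 : |1 - lam * ap| ≤ 1 + lam * M := by
    rw [abs_le]
    constructor
    · nlinarith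
    · nlinarith
  have hmain : -(2 * (1 + lam * M) * |x - y|) ≤
      ((Real.sin y) ^ 2 - (Real.sin x) ^ 2) * (1 - lam * ap) := by
    have h3 : |((Real.sin y) ^ 2 - (Real.sin x) ^ 2) * (1 - lam * ap)| ≤
        (2 * |x - y|) * (1 + lam * M) := by
      rw [abs_mul]
      exact mul_le_mul hb1 hb2 (abs_nonneg _) (by positivity)
    have h4 := neg_abs_le (((Real.sin y) ^ 2 - (Real.sin x) ^ 2) * (1 - lam * ap))
    nlinarith [h3, h4]
  linarith [hid, hmain]

theorem stmt12 (A φ ψ : ℝ → ℝ) (lam tm : ℝ)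
    (hlam : 0 < lam)
    (hA_cont : ContinuousOn A (Icc 0 1))
    (hA_pos : ∀ t ∈ Icc (0:ℝ) 1, 0 < A t)
    (hA_mono : StrictMonoOn A (Icc 0 1))
    (htm : tm ∈ Ioo (0:ℝ) 1)
    (hφ : ∀ τ ∈ Icc (0:ℝ) (min tm (1 - tm)),
      HasDerivAt φ
        (-(Real.sin (φ τ)) ^ 2 - lam * A (tm - τ) * (Real.cos (φ τ)) ^ 2) τ)
    (hψ : ∀ τ ∈ Icc (0:ℝ) (min tm (1 - tm)),
      HasDerivAt ψ
        (-(Real.sin (ψ τ)) ^ 2 - lam * A (tm + τ) * (Real.cos (ψ τ)) ^ 2) τ)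
    (hφ0 : φ 0 = 0) (hψ0 : ψ 0 = 0) :
    ∀ τ, 0 < τ → τ ≤ tm → tm + τ ≤ 1 → -(Real.pi / 2) ≤ ψ τ →
      ψ τ < φ τ ∧ φ τ < 0 := by
  intro τ hτpos hτtm hτ1 _hψge
  obtain ⟨htm0, htm1⟩ := htm
  have hτT : τ ≤ min tm (1 - tm) := le_min hτtm (by linarith)
  -- memberships
  have hmemT : ∀ σ ∈ Icc (0:ℝ) τ, σ ∈ Icc (0:ℝ) (min tm (1 - tm)) :=
    fun σ hσ => ⟨hσ.1, le_trans hσ.2 hτT⟩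
  have hsub : ∀ σ ∈ Icc (0:ℝ) τ, (tm - σ) ∈ Icc (0:ℝ) 1 ∧ (tm + σ) ∈ Icc (0:ℝ) 1 := by
    intro σ hσ
    obtain ⟨h1, h2⟩ := hσ
    refine ⟨⟨by linarith, by linarith⟩, ⟨by linarith, by linarith⟩⟩
  have hone : (1:ℝ) ∈ Icc (0:ℝ) 1 := ⟨zero_le_one, le_refl 1⟩
  have hMle : ∀ t ∈ Icc (0:ℝ) 1, A t ≤ A 1 := fun t ht =>
    hA_mono.monotoneOn ht hone ht.2
  set L : ℝ := 2 * (1 + lam * A 1) with hLdef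
  have hA1pos : 0 < A 1 := hA_pos 1 hone
  have hLpos : 0 < L := by rw [hLdef]; nlinarith
  -- derivative of the difference
  have hu : ∀ σ ∈ Icc (0:ℝ) τ, HasDerivAt (fun x => φ x - ψ x)
      ((-(Real.sin (φ σ)) ^ 2 - lam * A (tm - σ) * (Real.cos (φ σ)) ^ 2) -
       (-(Real.sin (ψ σ)) ^ 2 - lam * A (tm + σ) * (Real.cos (ψ σ)) ^ 2)) σ :=
    fun σ hσ => (hφ σ (hmemT σ hσ)).sub (hψ σ (hmemT σ hσ))
  -- lower bound on the derivative of the difference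
  have hdb : ∀ σ ∈ Icc (0:ℝ) τ,
      -(L * |φ σ - ψ σ|) + lam * (A (tm + σ) - A (tm - σ)) * (Real.cos (φ σ)) ^ 2 ≤
      (-(Real.sin (φ σ)) ^ 2 - lam * A (tm - σ) * (Real.cos (φ σ)) ^ 2) -
       (-(Real.sin (ψ σ)) ^ 2 - lam * A (tm + σ) * (Real.cos (ψ σ)) ^ 2) := by
    intro σ hσ
    obtain ⟨hm1, hm2⟩ := hsub σ hσ
    have := stmt12_aux_ineq lam (A 1) (A (tm + σ)) (A (tm - σ)) (φ σ) (ψ σ)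
      hlam (hA_pos _ hm2) (hMle _ hm2)
    rw [hLdef]
    linarith
  -- the "gain" term is nonnegative
  have hpnonneg : ∀ σ ∈ Icc (0:ℝ) τ,
      0 ≤ lam * (A (tm + σ) - A (tm - σ)) * (Real.cos (φ σ)) ^ 2 := by
    intro σ hσ
    obtain ⟨hm1, hm2⟩ := hsub σ hσ
    have hle : A (tm - σ) ≤ A (tm + σ) :=
      hA_mono.monotoneOn hm1 hm2 (by linarith [hσ.1])
    have : 0 ≤ lam * (A (tm + σ) - A (tm - σ)) := by nlinarith
    positivity
  -- continuity of the difference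
  have hucont : ∀ σ ∈ Icc (0:ℝ) τ, ContinuousAt (fun x => φ x - ψ x) σ :=
    fun σ hσ => (hu σ hσ).continuousAt
  -- Step 1: weak comparison, ψ ≤ φ on [0, τ]
  have hweak : ∀ σ ∈ Icc (0:ℝ) τ, 0 ≤ φ σ - ψ σ := by
    intro σ2 hσ2
    by_contra hneg
    push_neg at hneg
    have hIccsub : Icc (0:ℝ) σ2 ⊆ Icc (0:ℝ) τ :=
      Icc_subset_Icc (le_refl 0) hσ2.2
    set S : Set ℝ := Icc (0:ℝ) σ2 ∩ (fun x => φ x - ψ x) ⁻¹' (Ici 0) with hSdef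
    have hS0 : (0:ℝ) ∈ S := by
      refine ⟨left_mem_Icc.mpr hσ2.1, ?_⟩
      simp [hφ0, hψ0]
    have hSne : S.Nonempty := ⟨0, hS0⟩
    have hSbdd : BddAbove S := ⟨σ2, fun x hx => hx.1.2⟩
    have hSclosed : IsClosed S := by
      apply ContinuousOn.preimage_isClosed_of_isClosed
      · exact fun x hx => (hucont x (hIccsub hx)).continuousWithinAt
      · exact isClosed_Icc
      · exact isClosed_Ici
    have hsS : sSup S ∈ S := hSclosed.csSup_mem hSne hSbdd
    set s : ℝ := sSup S with hsdef
    have hs0 : 0 ≤ s := hsS.1.1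
    have hsσ2 : s ≤ σ2 := hsS.1.2
    have hus : 0 ≤ φ s - ψ s := hsS.2
    -- every point strictly between s and σ2 has u < 0
    have hneg' : ∀ x, s < x → x ≤ σ2 → φ x - ψ x < 0 := by
      intro x hx1 hx2
      by_contra hge
      push_neg at hge
      have : x ∈ S := ⟨⟨by linarith, hx2⟩, hge⟩
      exact absurd (le_csSup hSbdd this) (not_le.mpr hx1)
    -- y = u * exp(-(L x)) is monotone on [s, σ2]
    have hexp : ∀ x : ℝ, HasDerivAt (fun x => Real.exp (-(L * x)))
        (Real.exp (-(L * x)) * (-L)) x := by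
      intro x
      have h1 : HasDerivAt (fun x : ℝ => -(L * x)) (-L) x := by
        simpa using ((hasDerivAt_id x).const_mul L).fun_neg
      exact h1.exp
    have hyd : ∀ x ∈ Icc (0:ℝ) τ, HasDerivAt (fun x => (φ x - ψ x) * Real.exp (-(L * x)))
        (((-(Real.sin (φ x)) ^ 2 - lam * A (tm - x) * (Real.cos (φ x)) ^ 2) -
          (-(Real.sin (ψ x)) ^ 2 - lam * A (tm + x) * (Real.cos (ψ x)) ^ 2)) *
            Real.exp (-(L * x)) +
          (φ x - ψ x) * (Real.exp (-(L * x)) * (-L))) x :=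
      fun x hx => (hu x hx).mul (hexp x)
    have hmono : MonotoneOn (fun x => (φ x - ψ x) * Real.exp (-(L * x))) (Icc s σ2) := by
      have hsubτ : Icc s σ2 ⊆ Icc (0:ℝ) τ :=
        fun x hx => ⟨le_trans hs0 hx.1, le_trans hx.2 hσ2.2⟩
      apply monotoneOn_of_deriv_nonneg (convex_Icc s σ2)
      · exact fun x hx => ((hyd x (hsubτ hx)).continuousAt).continuousWithinAt
      · intro x hx
        rw [interior_Icc] at hx
        exact ((hyd x (hsubτ (Ioo_subset_Icc_self hx))).differentiableAt).differentiableWithinAt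
      · intro x hx
        rw [interior_Icc] at hx
        have hxτ : x ∈ Icc (0:ℝ) τ := hsubτ (Ioo_subset_Icc_self hx)
        rw [(hyd x hxτ).deriv]
        have hux : φ x - ψ x < 0 := hneg' x hx.1 hx.2.le
        have habs : |φ x - ψ x| = -(φ x - ψ x) := abs_of_neg hux
        have hd := hdb x hxτ
        have hp := hpnonneg x hxτ
        rw [habs] at hd
        have hkey : 0 ≤ ((-(Real.sin (φ x)) ^ 2 - lam * A (tm - x) * (Real.cos (φ x)) ^ 2) -
            (-(Real.sin (ψ x)) ^ 2 - lam * A (tm + x) * (Real.cos (ψ x)) ^ 2)) -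
            L * (φ x - ψ x) := by linarith
        have hepos : 0 < Real.exp (-(L * x)) := Real.exp_pos _
        nlinarith
    have h1 : (φ s - ψ s) * Real.exp (-(L * s)) ≤
        (φ σ2 - ψ σ2) * Real.exp (-(L * σ2)) :=
      hmono (left_mem_Icc.mpr hsσ2) (right_mem_Icc.mpr hsσ2) hsσ2
    have h2 : 0 ≤ (φ s - ψ s) * Real.exp (-(L * s)) := by positivity
    have h3 : (φ σ2 - ψ σ2) * Real.exp (-(L * σ2)) < 0 :=
      mul_neg_of_neg_of_pos hneg (Real.exp_pos _)
    linarith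
  -- Step 2: strict separation near 0
  have hφcont : ContinuousAt φ 0 :=
    (hφ 0 ⟨le_refl 0, le_trans hτpos.le hτT⟩).continuousAt
  obtain ⟨δ, hδpos, hδ⟩ := Metric.continuousAt_iff.mp hφcont (Real.pi / 2)
    (by positivity)
  set σ1 : ℝ := min (δ / 2) τ with hσ1def
  have hσ1pos : 0 < σ1 := lt_min (by linarith) hτpos
  have hσ1τ : σ1 ≤ τ := min_le_right _ _
  have hφsmall : ∀ x ∈ Icc (0:ℝ) σ1, |φ x| < Real.pi / 2 := by
    intro x hx
    have hxδ : dist x 0 < δ := by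
      rw [Real.dist_eq, sub_zero, abs_of_nonneg hx.1]
      calc x ≤ σ1 := hx.2
        _ ≤ δ / 2 := min_le_left _ _
        _ < δ := by linarith
    have := hδ hxδ
    rwa [Real.dist_eq, hφ0, sub_zero] at this
  -- w = u * exp(L x)
  have hexp' : ∀ x : ℝ, HasDerivAt (fun x => Real.exp (L * x))
      (Real.exp (L * x) * L) x := by
    intro x
    have h1 : HasDerivAt (fun x : ℝ => L * x) L x := by
      simpa using (hasDerivAt_id x).const_mul L
    exact h1.exp
  have hwd : ∀ x ∈ Icc (0:ℝ) τ, HasDerivAt (fun x => (φ x - ψ x) * Real.exp (L * x))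
      (((-(Real.sin (φ x)) ^ 2 - lam * A (tm - x) * (Real.cos (φ x)) ^ 2) -
        (-(Real.sin (ψ x)) ^ 2 - lam * A (tm + x) * (Real.cos (ψ x)) ^ 2)) *
          Real.exp (L * x) +
        (φ x - ψ x) * (Real.exp (L * x) * L)) x :=
    fun x hx => (hu x hx).mul (hexp' x)
  have hwderiv_nonneg : ∀ x ∈ Icc (0:ℝ) τ,
      0 ≤ deriv (fun x => (φ x - ψ x) * Real.exp (L * x)) x := by
    intro x hxτ
    rw [(hwd x hxτ).deriv]
    have hux : 0 ≤ φ x - ψ x := hweak x hxτ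
    have habs : |φ x - ψ x| = φ x - ψ x := abs_of_nonneg hux
    have hd := hdb x hxτ
    have hp := hpnonneg x hxτ
    rw [habs] at hd
    have hepos : 0 < Real.exp (L * x) := Real.exp_pos _
    nlinarith
  have hwcont : ContinuousOn (fun x => (φ x - ψ x) * Real.exp (L * x)) (Icc 0 τ) :=
    fun x hx => ((hwd x hx).continuousAt).continuousWithinAt
  -- strictly increasing on [0, σ1]
  have hstrict : StrictMonoOn (fun x => (φ x - ψ x) * Real.exp (L * x)) (Icc 0 σ1) := by
    apply strictMonoOn_of_deriv_pos (convex_Icc 0 σ1)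
    · exact hwcont.mono (Icc_subset_Icc (le_refl 0) hσ1τ)
    · intro x hx
      rw [interior_Icc] at hx
      have hxσ1 : x ∈ Icc (0:ℝ) σ1 := Ioo_subset_Icc_self hx
      have hxτ : x ∈ Icc (0:ℝ) τ := ⟨hx.1.le, le_trans hx.2.le hσ1τ⟩
      rw [(hwd x hxτ).deriv]
      have hux : 0 ≤ φ x - ψ x := hweak x hxτ
      have habs : |φ x - ψ x| = φ x - ψ x := abs_of_nonneg hux
      have hd := hdb x hxτ
      rw [habs] at hd
      -- gain term is strictly positive here
      obtain ⟨hm1, hm2⟩ := hsub x hxτ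
      have hAlt : A (tm - x) < A (tm + x) := hA_mono hm1 hm2 (by linarith [hx.1])
      have hcos : 0 < Real.cos (φ x) := by
        apply Real.cos_pos_of_mem_Ioo
        have := abs_lt.mp (hφsmall x hxσ1)
        exact ⟨this.1, this.2⟩
      have hppos : 0 < lam * (A (tm + x) - A (tm - x)) * (Real.cos (φ x)) ^ 2 := by
        have h1 : 0 < A (tm + x) - A (tm - x) := by linarith
        positivity
      have hepos : 0 < Real.exp (L * x) := Real.exp_pos _
      nlinarith
  have hw0 : (fun x => (φ x - ψ x) * Real.exp (L * x)) 0 = 0 := by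
    simp [hφ0, hψ0]
  have hwσ1 : 0 < (φ σ1 - ψ σ1) * Real.exp (L * σ1) := by
    have := hstrict (left_mem_Icc.mpr hσ1pos.le) (right_mem_Icc.mpr hσ1pos.le) hσ1pos
    rw [hw0] at this
    exact this
  -- monotone on [σ1, τ]
  have hmono2 : MonotoneOn (fun x => (φ x - ψ x) * Real.exp (L * x)) (Icc σ1 τ) := by
    have hsubτ : Icc σ1 τ ⊆ Icc (0:ℝ) τ :=
      fun x hx => ⟨le_trans hσ1pos.le hx.1, hx.2⟩
    apply monotoneOn_of_deriv_nonneg (convex_Icc σ1 τ)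
    · exact hwcont.mono hsubτ
    · intro x hx
      rw [interior_Icc] at hx
      exact ((hwd x (hsubτ (Ioo_subset_Icc_self hx))).differentiableAt).differentiableWithinAt
    · intro x hx
      rw [interior_Icc] at hx
      exact hwderiv_nonneg x (hsubτ (Ioo_subset_Icc_self hx))
  have hwτ : (φ σ1 - ψ σ1) * Real.exp (L * σ1) ≤ (φ τ - ψ τ) * Real.exp (L * τ) :=
    hmono2 (left_mem_Icc.mpr hσ1τ) (right_mem_Icc.mpr hσ1τ) hσ1τ
  have huτpos : 0 < φ τ - ψ τ := by
    have hepos : 0 < Real.exp (L * τ) := Real.exp_pos _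
    nlinarith
  -- Step 3: φ τ < 0 since φ is strictly decreasing
  have hanti : StrictAntiOn φ (Icc 0 τ) := by
    apply strictAntiOn_of_deriv_neg (convex_Icc 0 τ)
    · exact fun x hx => ((hφ x (hmemT x hx)).continuousAt).continuousWithinAt
    · intro x hx
      rw [interior_Icc] at hx
      have hxτ : x ∈ Icc (0:ℝ) τ := Ioo_subset_Icc_self hx
      rw [(hφ x (hmemT x hxτ)).deriv]
      have hm1 := (hsub x hxτ).1
      have hApos := hA_pos _ hm1
      exact stmt12_aux_neg (lam * A (tm - x)) (φ x) (by positivity)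
  have hφτ : φ τ < 0 := by
    have := hanti (left_mem_Icc.mpr hτpos.le) (right_mem_Icc.mpr hτpos.le) hτpos
    rwa [hφ0] at this
  exact ⟨by linarith, hφτ⟩
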